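/- Let X be a compact Hausdorff space with a distinguished point *, and let A ⊆ X \ {*} be a compact open subset with characteristic function χ_A. Suppose ν : C(A) → ℝ preserves constants, is weakly additive, weakly preserves order, and is (2^s − 1)-Lipschitz for some s ≥ 1. Fix t ∈ [0,1]. Then the functional μ : C(X) → ℝ defined by μ(φ) = φ(*) + max(t·ν(φ|A − φ(*)), 0) + min(t·ν(φ|A − φ(*)), 0) = φ(*) + t·ν(φ|A − φ(*)) is weakly additive and preserves constants, and is (2^{s+1} − 1)-Lipschitz with respect to the sup-norms. -/
import Mathlib


theorem extension_functional_properties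
    {X : Type*} [TopologicalSpace X] [CompactSpace X] [T2Space X]
    (p : X) (A : Set X) (hAopen : IsOpen A) [CompactSpace ↥A]
    (hpA : p ∉ A) (hAne : A.Nonempty)
    (s : ℕ) (hs : 1 ≤ s)
    (ν : C(↥A, ℝ) → ℝ)
    (hconst : ∀ c : ℝ, ν (ContinuousMap.const ↥A c) = c)
    (hwa : ∀ (ψ : C(↥A, ℝ)) (c : ℝ), ν (ψ + ContinuousMap.const ↥A c) = ν ψ + c)
    (hord : ∀ (ψ : C(↥A, ℝ)) (a b : ℝ), (∀ y, a ≤ ψ y) → (∀ y, ψ y ≤ b) →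
      a ≤ ν ψ ∧ ν ψ ≤ b)
    (hlip : ∀ ψ₁ ψ₂ : C(↥A, ℝ), |ν ψ₁ - ν ψ₂| ≤ (2 ^ s - 1) * ‖ψ₁ - ψ₂‖)
    (t : ℝ) (ht : t ∈ Set.Icc (0 : ℝ) 1) :
    let μ : C(X, ℝ) → ℝ := fun φ =>
      φ p + t * ν (φ.restrict A - ContinuousMap.const ↥A (φ p))
    (∀ c : ℝ, μ (ContinuousMap.const X c) = c) ∧
    (∀ (φ : C(X, ℝ)) (c : ℝ), μ (φ + ContinuousMap.const X c) = μ φ + c) ∧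
    (∀ φ ψ : C(X, ℝ), |μ φ - μ ψ| ≤ (2 ^ (s + 1) - 1) * ‖φ - ψ‖) := by
  intro μ
  obtain ⟨ht0, ht1⟩ := ht
  have hzero : ν 0 = 0 := by
    have := hconst 0
    simpa using this
  refine ⟨?_, ?_, ?_⟩
  · intro c
    have h : (ContinuousMap.const X c).restrict A -
        ContinuousMap.const ↥A c = 0 := by
      ext x; simp
    simp only [μ, ContinuousMap.const_apply, h, hzero, mul_zero, add_zero]
  · intro φ c
    have h : (φ + ContinuousMap.const X c).restrict A -
        ContinuousMap.const ↥A (φ p + c) =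
        φ.restrict A - ContinuousMap.const ↥A (φ p) := by
      ext x; simp
    simp only [μ, h, ContinuousMap.add_apply, ContinuousMap.const_apply]
    ring
  · intro φ ψ
    set g₁ := φ.restrict A - ContinuousMap.const ↥A (φ p)
    set g₂ := ψ.restrict A - ContinuousMap.const ↥A (ψ p)
    have hnn : (0:ℝ) ≤ ‖φ - ψ‖ := norm_nonneg _
    have hpt : ∀ x : X, |φ x - ψ x| ≤ ‖φ - ψ‖ := by
      intro x
      have := ContinuousMap.norm_coe_le_norm (φ - ψ) x
      simpa using this
    have hg : ‖g₁ - g₂‖ ≤ 2 * ‖φ - ψ‖ := by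
      apply ContinuousMap.norm_le _ (by positivity) |>.2
      intro x
      have h1 := hpt (x : X)
      have h2 := hpt p
      simp only [g₁, g₂, ContinuousMap.sub_apply, ContinuousMap.restrict_apply,
        ContinuousMap.const_apply]
      have : φ ↑x - φ p - (ψ ↑x - ψ p) = (φ ↑x - ψ ↑x) - (φ p - ψ p) := by ring
      rw [Real.norm_eq_abs, this]
      calc |(φ ↑x - ψ ↑x) - (φ p - ψ p)| ≤ |φ ↑x - ψ ↑x| + |φ p - ψ p| := abs_sub _ _
        _ ≤ ‖φ - ψ‖ + ‖φ - ψ‖ := add_le_add h1 h2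
        _ = 2 * ‖φ - ψ‖ := by ring
    have hs2 : (0:ℝ) ≤ 2 ^ s - 1 := by
      have : (1:ℝ) ≤ 2 ^ s := one_le_pow₀ (by norm_num)
      linarith
    have hν : |ν g₁ - ν g₂| ≤ (2 ^ s - 1) * (2 * ‖φ - ψ‖) :=
      (hlip g₁ g₂).trans (by nlinarith [hlip g₁ g₂])
    have heq : μ φ - μ ψ = (φ p - ψ p) + t * (ν g₁ - ν g₂) := by
      simp only [μ]; ring
    calc |μ φ - μ ψ| = |(φ p - ψ p) + t * (ν g₁ - ν g₂)| := by rw [heq]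
        _ ≤ |φ p - ψ p| + |t * (ν g₁ - ν g₂)| := abs_add_le _ _
        _ = |φ p - ψ p| + t * |ν g₁ - ν g₂| := by
          rw [abs_mul, abs_of_nonneg ht0]
        _ ≤ ‖φ - ψ‖ + 1 * ((2 ^ s - 1) * (2 * ‖φ - ψ‖)) := by
          have := mul_le_mul ht1 hν (abs_nonneg _) (by norm_num)
          have h2 := hpt p
          nlinarith [abs_nonneg (ν g₁ - ν g₂)]
        _ ≤ (2 ^ (s + 1) - 1) * ‖φ - ψ‖ := by
          rw [pow_succ]
          nlinarith
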